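/- For every integer a, the multiplication operator t^{2a+1} = w_{2a+1,0} on ℂ[t,t⁻¹] belongs to the Lie subalgebra L of the ℂ-endomorphism algebra of ℂ[t,t⁻¹] generated (under commutator) by the four operators t, D³, t²(D+1) and t⁻²(D−1). (This is the generation of the twisted Heisenberg part of W⁻ by the generating set of Lemma 2.4, realized on operators.) -/

import Mathlib

open Polynomial LaurentPolynomial

attribute [local instance 100] LieRing.ofAssociativeRing

lemma end_ext' {f g : Module.End ℂ (LaurentPolynomial ℂ)}
    (h : ∀ m : ℤ, f (T m) = g (T m)) : f = g := by
  apply LinearMap.ext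
  intro p
  induction p using LaurentPolynomial.induction_on' with
  | add p q hp hq => rw [map_add, map_add, hp, hq]
  | C_mul_T a b =>
  have : (LaurentPolynomial.C b * T a : LaurentPolynomial ℂ) = b • T a := by
    rw [Algebra.smul_def]; rfl
  rw [this, map_smul, map_smul]
  exact congrArg (b • ·) (h a)

/-- for every integer `a`, the multiplication operator
`t^{2a+1} = w_{2a+1,0}` on `ℂ[t,t⁻¹]` belongs to the Lie subalgebra generated by the
four operators `t`, `D³`, `t²(D+1)` and `t⁻²(D−1)` (the generating set of Lemma 2.4). -/
theorem w_odd_mem_lieSpan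
    (w : ℤ → ℕ → Module.End ℂ (LaurentPolynomial ℂ))
    (hw : ∀ (k : ℤ) (l : ℕ) (m : ℤ),
      w k l (T m) = ((m : ℂ) ^ l) • (T (m + k) : LaurentPolynomial ℂ))
    (a : ℤ) :
    w (2 * a + 1) 0 ∈
      LieSubalgebra.lieSpan ℂ (Module.End ℂ (LaurentPolynomial ℂ))
        {w 1 0, w 0 3, w 2 1 + w 2 0, w (-2) 1 - w (-2) 0} := by
  set S := LieSubalgebra.lieSpan ℂ (Module.End ℂ (LaurentPolynomial ℂ))
      {w 1 0, w 0 3, w 2 1 + w 2 0, w (-2) 1 - w (-2) 0} with hS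
  have hA : ∀ k : ℤ, ⁅w 2 1 + w 2 0, w k 0⁆ = (k : ℂ) • w (k + 2) 0 := by
    intro k
    apply end_ext'
    intro m
    simp only [LieHom.lie_apply, Ring.lie_def, LinearMap.sub_apply, Module.End.mul_apply,
      LinearMap.add_apply, LinearMap.smul_apply, map_add, map_smul, hw]
    push_cast
    rw [show m + k + 2 = m + (k + 2) by ring, show m + 2 + k = m + (k + 2) by ring]
    module
  have hB : ∀ k : ℤ, ⁅w (-2) 1 - w (-2) 0, w k 0⁆ = (k : ℂ) • w (k - 2) 0 := by
    intro k
    apply end_ext'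
    intro m
    simp only [LieHom.lie_apply, Ring.lie_def, LinearMap.sub_apply, Module.End.mul_apply,
      LinearMap.smul_apply, map_sub, map_smul, hw]
    push_cast
    rw [show m + k + -2 = m + (k - 2) by ring, show m + -2 + k = m + (k - 2) by ring]
    module
  have hAmem : w 2 1 + w 2 0 ∈ S := LieSubalgebra.subset_lieSpan (by simp)
  have hBmem : w (-2) 1 - w (-2) 0 ∈ S := LieSubalgebra.subset_lieSpan (by simp)
  have key : ∀ a : ℤ, w (2 * a + 1) 0 ∈ S := by
    intro a
    induction a using Int.induction_on with
    | zero => exact LieSubalgebra.subset_lieSpan (by simp)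
    | succ n ih =>
      have h1 : ⁅w 2 1 + w 2 0, w (2 * (n : ℤ) + 1) 0⁆ ∈ S := S.lie_mem hAmem ih
      rw [hA] at h1
      have hne : ((2 * (n : ℤ) + 1 : ℤ) : ℂ) ≠ 0 := by
        exact_mod_cast (by omega : (2 * (n : ℤ) + 1) ≠ 0)
      have h2 := S.smul_mem (((2 * (n : ℤ) + 1 : ℤ) : ℂ))⁻¹ h1
      rw [smul_smul, inv_mul_cancel₀ hne, one_smul] at h2
      rw [show 2 * ((n : ℤ) + 1) + 1 = 2 * (n : ℤ) + 1 + 2 by ring]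
      exact h2
    | pred n ih =>
      have h1 : ⁅w (-2) 1 - w (-2) 0, w (2 * (-(n : ℤ)) + 1) 0⁆ ∈ S := S.lie_mem hBmem ih
      rw [hB] at h1
      have hne : ((2 * (-(n : ℤ)) + 1 : ℤ) : ℂ) ≠ 0 := by
        exact_mod_cast (by omega : (2 * (-(n : ℤ)) + 1) ≠ 0)
      have h2 := S.smul_mem (((2 * (-(n : ℤ)) + 1 : ℤ) : ℂ))⁻¹ h1
      rw [smul_smul, inv_mul_cancel₀ hne, one_smul] at h2
      rw [show 2 * (-(n : ℤ) - 1) + 1 = 2 * (-(n : ℤ)) + 1 - 2 by ring]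
      exact h2
  exact key a
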